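/- Adaptive restart bound on restart length: suppose ρ_{‖z̄^{n,t} − z^{n,0}‖}(z̄^{n,t}) ≤ 2C‖z̄^{n,t} − z^{n,0}‖/t, ‖z̄^{n,t} − z^{n,0}‖ ≤ (q+2)·dist(z^{n,0}, Z*), and α·dist(z^{n,0}, Z*) ≤ ρ_{‖z^{n,0} − z^{n−1,0}‖}(z^{n,0}) (sharpness at the restart point). If t* = ⌈2C(q+2)/(αβ)⌉, then at t = t* the adaptive restart condition ρ_{‖z̄^{n,t*} − z^{n,0}‖}(z̄^{n,t*}) ≤ β·ρ_{‖z^{n,0} − z^{n−1,0}‖}(z^{n,0}) holds; consequently the adaptive restart length τₙ satisfies τₙ ≤ t*. -/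

import Mathlib

/-- adaptive restart length bound: let `ρbar t` denote the normalized duality
gap `ρ_{‖z̄^{n,t} − z^{n,0}‖}(z̄^{n,t})`, `rbar t = ‖z̄^{n,t} − z^{n,0}‖`,
`D = dist(z^{n,0}, Z*)`, and `ρprev = ρ_{‖z^{n,0} − z^{n−1,0}‖}(z^{n,0})`. Suppose
`ρbar t ≤ 2C·(rbar t)/t`, `rbar t ≤ (q+2)·D`, and sharpness `α·D ≤ ρprev`. Then at
`t* = ⌈2C(q+2)/(αβ)⌉` the adaptive restart condition `ρbar t* ≤ β·ρprev` holds; consequently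
the adaptive restart length `τₙ` (the least such `t`) satisfies `τₙ ≤ t*`. -/
theorem adaptive_restart_length_bound
    (C q α β D ρprev : ℝ) (hC : 0 < C) (hq : 0 ≤ q) (hα : 0 < α)
    (hβ : β ∈ Set.Ioo (0 : ℝ) 1) (hD : 0 ≤ D)
    (ρbar rbar : ℕ → ℝ) (hrnn : ∀ t, 0 ≤ rbar t)
    (h1 : ∀ t : ℕ, 1 ≤ t → ρbar t ≤ 2 * C * rbar t / t)
    (h2 : ∀ t : ℕ, rbar t ≤ (q + 2) * D)
    (h3 : α * D ≤ ρprev) :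
    ρbar ⌈2 * C * (q + 2) / (α * β)⌉₊ ≤ β * ρprev ∧
      ∀ τ : ℕ, IsLeast {t : ℕ | 1 ≤ t ∧ ρbar t ≤ β * ρprev} τ →
        τ ≤ ⌈2 * C * (q + 2) / (α * β)⌉₊ := by
  obtain ⟨hβ0, hβ1⟩ := hβ
  set x := 2 * C * (q + 2) / (α * β) with hx
  have hxpos : 0 < x := by positivity
  have ht1 : 1 ≤ ⌈x⌉₊ := Nat.one_le_ceil_iff.mpr hxpos
  have htpos : (0 : ℝ) < (⌈x⌉₊ : ℝ) := by exact_mod_cast ht1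
  have hle : x ≤ (⌈x⌉₊ : ℝ) := Nat.le_ceil x
  have hxeq : x * (α * β) = 2 * C * (q + 2) := by
    rw [hx, div_mul_cancel₀]
    positivity
  have key : ρbar ⌈x⌉₊ ≤ β * ρprev := by
    have hA : ρbar ⌈x⌉₊ ≤ 2 * C * rbar ⌈x⌉₊ / ⌈x⌉₊ := h1 _ ht1
    have hB : 2 * C * rbar ⌈x⌉₊ / ⌈x⌉₊ ≤ β * (α * D) := by
      rw [div_le_iff₀ htpos]
      have h2' : 2 * C * rbar ⌈x⌉₊ ≤ 2 * C * ((q + 2) * D) := by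
        have := h2 ⌈x⌉₊
        nlinarith
      have hmul : x * (α * β * D) ≤ (⌈x⌉₊ : ℝ) * (α * β * D) := by
        apply mul_le_mul_of_nonneg_right hle
        positivity
      nlinarith [hxeq]
    have hC2 : β * (α * D) ≤ β * ρprev := by nlinarith
    linarith
  refine ⟨key, fun τ hτ => hτ.2 ⟨ht1, key⟩⟩
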